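/- If the density ratio f/g is bounded above by a constant M on the support of f, then the Kullback-Leibler divergence K(f;g) = ∫ log(f/g) f dx satisfies K(f;g) ≤ 2M H²(f,g), where H² is the squared Hellinger distance. -/

import Mathlib

open Real MeasureTheory

lemma log_le_quad {x : ℝ} (hx0 : 0 < x) (hx1 : x ≤ 1) :
    Real.log x ≤ (x - 1) - (x - 1) ^ 2 / 2 := by
  set F : ℝ → ℝ := fun y => (y - 1) - (y - 1) ^ 2 / 2 - Real.log y with hF
  have key : ∀ y ∈ Set.Ioi (0:ℝ), HasDerivAt F (1 - (y - 1) - y⁻¹) y := by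
    intro y hy
    have h1 : HasDerivAt (fun y : ℝ => (y - 1) - (y - 1) ^ 2 / 2) (1 - (y - 1)) y := by
      have := (((hasDerivAt_id y).sub_const 1).pow 2).div_const 2
      have := ((hasDerivAt_id y).sub_const 1).sub this
      exact this.congr_deriv (by simp)
    exact h1.sub (Real.hasDerivAt_log (ne_of_gt hy))
  have hanti : AntitoneOn F (Set.Icc x 1) := by
    apply antitoneOn_of_deriv_nonpos (convex_Icc x 1)
    · apply ContinuousOn.sub (by fun_prop)
      exact Real.continuousOn_log.mono (fun y hy => ne_of_gt (lt_of_lt_of_le hx0 hy.1))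
    · intro y hy
      rw [interior_Icc] at hy
      exact ((key y (lt_of_lt_of_le hx0 (le_of_lt hy.1))).differentiableAt).differentiableWithinAt
    · intro y hy
      rw [interior_Icc] at hy
      have hy0 : 0 < y := lt_of_lt_of_le hx0 (le_of_lt hy.1)
      rw [(key y hy0).deriv]
      rw [sub_nonpos, ← sub_nonneg]
      have : y⁻¹ - (1 - (y - 1)) = (y - 1) ^ 2 / y := by field_simp; ring
      rw [this]
      positivity
  have := hanti ⟨le_refl x, hx1⟩ ⟨hx1, le_refl 1⟩ hx1
  simp [hF, Real.log_one] at this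
  linarith

lemma log_le_cubic {x : ℝ} (hx : 1 ≤ x) :
    Real.log x ≤ (x - 1) - (x - 1) ^ 2 / 2 + (x - 1) ^ 3 / 3 := by
  set F : ℝ → ℝ := fun y => (y - 1) - (y - 1) ^ 2 / 2 + (y - 1) ^ 3 / 3 - Real.log y with hF
  have key : ∀ y ∈ Set.Ioi (0:ℝ), HasDerivAt F (1 - (y - 1) + (y - 1) ^ 2 - y⁻¹) y := by
    intro y hy
    have h2 : HasDerivAt (fun y : ℝ => (y - 1) ^ 2 / 2) (y - 1) y := by
      have := (((hasDerivAt_id y).sub_const 1).pow 2).div_const 2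
      exact this.congr_deriv (by simp)
    have h3 : HasDerivAt (fun y : ℝ => (y - 1) ^ 3 / 3) ((y - 1) ^ 2) y := by
      have := (((hasDerivAt_id y).sub_const 1).pow 3).div_const 3
      exact this.congr_deriv (by simp)
    have h1 : HasDerivAt (fun y : ℝ => (y - 1) - (y - 1) ^ 2 / 2 + (y - 1) ^ 3 / 3)
        (1 - (y - 1) + (y - 1) ^ 2) y := (((hasDerivAt_id y).sub_const 1).sub h2).add h3
    exact h1.sub (Real.hasDerivAt_log (ne_of_gt hy))
  have hmono : MonotoneOn F (Set.Icc 1 x) := by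
    apply monotoneOn_of_deriv_nonneg (convex_Icc 1 x)
    · apply ContinuousOn.sub (by fun_prop)
      exact Real.continuousOn_log.mono (fun y hy => by
        have : (0:ℝ) < y := lt_of_lt_of_le one_pos hy.1
        exact ne_of_gt this)
    · intro y hy
      rw [interior_Icc] at hy
      have hy0 : (0:ℝ) < y := lt_trans one_pos hy.1
      exact ((key y hy0).differentiableAt).differentiableWithinAt
    · intro y hy
      rw [interior_Icc] at hy
      have hy0 : (0:ℝ) < y := lt_trans one_pos hy.1
      rw [(key y hy0).deriv, ← sub_nonneg]
      have : 1 - (y - 1) + (y - 1) ^ 2 - y⁻¹ - 0 = (y - 1) ^ 3 / y := by field_simp; ring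
      rw [this]
      have h13 : (0:ℝ) ≤ (y-1)^3 := by nlinarith [hy.1]
      positivity
  have := hmono (Set.left_mem_Icc.mpr hx) ⟨hx, le_refl x⟩ hx
  simp only [hF, Real.log_one] at this
  norm_num at this
  linarith

lemma key_ineq {M x : ℝ} (hM : 1 ≤ M) (hx : 0 < x) (hxM : x ^ 2 ≤ M) :
    2 * x ^ 2 * Real.log x ≤ 2 * M * (x - 1) ^ 2 + (x ^ 2 - 1) := by
  rcases le_or_gt x 1 with h1 | h1
  · have hL := log_le_quad hx h1
    have h2L : 2 * x ^ 2 * Real.log x ≤ 2 * x ^ 2 * ((x - 1) - (x - 1) ^ 2 / 2) :=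
      mul_le_mul_of_nonneg_left hL (by positivity)
    nlinarith [mul_nonneg (sub_nonneg.2 hM) (sq_nonneg (x - 1)), sq_nonneg ((x - 1) ^ 2)]
  · rcases le_or_gt x 2 with h2 | h2
    · have hL := log_le_cubic h1.le
      have h2L : 2 * x ^ 2 * Real.log x ≤
          2 * x ^ 2 * ((x - 1) - (x - 1) ^ 2 / 2 + (x - 1) ^ 3 / 3) :=
        mul_le_mul_of_nonneg_left hL (by positivity)
      have ht : 0 ≤ x - 1 := by linarith
      have ht3 : 0 ≤ (x - 1) ^ 3 := by positivity
      have hcoef : 0 ≤ 10 + 5 * (x - 1) - 2 * (x - 1) ^ 2 := by nlinarith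
      nlinarith [mul_nonneg (sub_nonneg.2 hxM) (sq_nonneg (x - 1)), mul_nonneg ht3 hcoef]
    · have hL := Real.log_le_sub_one_of_pos hx
      have h2L : 2 * x ^ 2 * Real.log x ≤ 2 * x ^ 2 * (x - 1) :=
        mul_le_mul_of_nonneg_left hL (by positivity)
      have ht : 1 ≤ x - 1 := by linarith
      nlinarith [mul_nonneg (sub_nonneg.2 hxM) (sq_nonneg (x - 1)),
        mul_nonneg (mul_nonneg (sq_nonneg x) (by linarith : (0:ℝ) ≤ x - 1)) (by linarith : (0:ℝ) ≤ x - 2)]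

lemma pointwise_bound (M a b : ℝ) (hM : 1 ≤ M) (ha : 0 ≤ a) (hb : 0 ≤ b)
    (hab : a ≠ 0 → a ≤ M * b) :
    a * Real.log (a / b) ≤ 2 * M * (Real.sqrt a - Real.sqrt b) ^ 2 + (a - b) := by
  rcases eq_or_ne a 0 with h0 | h0
  · rw [h0]
    have hsb : (Real.sqrt b) ^ 2 = b := Real.sq_sqrt hb
    simp only [zero_mul, zero_sub, Real.sqrt_zero]
    nlinarith [Real.sqrt_nonneg b]
  · have ha' : 0 < a := lt_of_le_of_ne ha (Ne.symm h0)
    have hb' : 0 < b := by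
      rcases lt_or_eq_of_le hb with h | h
      · exact h
      · exfalso; have := hab h0; rw [← h] at this; nlinarith
    have hdiv : 0 < a / b := div_pos ha' hb'
    set s := Real.sqrt (a / b) with hs_def
    have hs : 0 < s := Real.sqrt_pos.2 hdiv
    have hs2 : s ^ 2 = a / b := Real.sq_sqrt hdiv.le
    have hsM : s ^ 2 ≤ M := by
      rw [hs2, div_le_iff₀ hb']
      exact hab h0
    have hkey := key_ineq hM hs hsM
    have hbkey := mul_le_mul_of_nonneg_left hkey hb'.le
    have has : a = b * s ^ 2 := by
      rw [hs2]; field_simp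
    have hlog : Real.log (a / b) = 2 * Real.log s := by
      rw [← hs2, Real.log_pow]; push_cast; ring
    have hsqrt_eq : Real.sqrt a = Real.sqrt b * s := by
      rw [hs_def, ← Real.sqrt_mul hb, mul_div_cancel₀ a (ne_of_gt hb')]
    have hsq : (Real.sqrt a - Real.sqrt b) ^ 2 = b * (s - 1) ^ 2 := by
      rw [hsqrt_eq]
      have : (Real.sqrt b) ^ 2 = b := Real.sq_sqrt hb
      nlinarith [this]
    have e1 : a * Real.log (a / b) = b * (2 * s ^ 2 * Real.log s) := by
      rw [hlog, has]; ring
    have e2 : 2 * M * (Real.sqrt a - Real.sqrt b) ^ 2 + (a - b)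
        = b * (2 * M * (s - 1) ^ 2 + (s ^ 2 - 1)) := by
      rw [hsq, has]; ring
    rw [e1, e2]
    exact hbkey

/-- If the density ratio f/g is bounded above by M on the support of f, then
the Kullback-Leibler divergence satisfies K(f;g) ≤ 2 M H²(f,g). -/
theorem kl_le_hellinger {α : Type*} [MeasurableSpace α] (μ : Measure α)
    (f g : α → ℝ) (M : ℝ) (hM : 0 < M)
    (hfm : Measurable f) (hgm : Measurable g)
    (hf0 : ∀ x, 0 ≤ f x) (hg0 : ∀ x, 0 ≤ g x)
    (hf1 : ∫ x, f x ∂μ = 1) (hg1 : ∫ x, g x ∂μ = 1)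
    (hratio : ∀ x, f x ≠ 0 → f x ≤ M * g x) :
    ∫ x, f x * Real.log (f x / g x) ∂μ ≤
      2 * M * ∫ x, (Real.sqrt (f x) - Real.sqrt (g x)) ^ 2 ∂μ := by
  -- integrability of f and g
  have hint_f : Integrable f μ := by
    by_contra h
    rw [integral_undef h] at hf1; norm_num at hf1
  have hint_g : Integrable g μ := by
    by_contra h
    rw [integral_undef h] at hg1; norm_num at hg1
  -- f ≤ M g everywhere
  have hfg : ∀ x, f x ≤ M * g x := by
    intro x
    rcases eq_or_ne (f x) 0 with h | h
    · rw [h]; exact mul_nonneg hM.le (hg0 x)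
    · exact hratio x h
  -- M ≥ 1
  have hM1 : (1:ℝ) ≤ M := by
    have := integral_mono hint_f (hint_g.const_mul M) hfg
    rwa [hf1, integral_const_mul, hg1, mul_one] at this
  -- pointwise bound
  have hpt : ∀ x, f x * Real.log (f x / g x) ≤
      2 * M * (Real.sqrt (f x) - Real.sqrt (g x)) ^ 2 + (f x - g x) :=
    fun x => pointwise_bound M (f x) (g x) hM1 (hf0 x) (hg0 x) (hratio x)
  -- lower pointwise bound
  have hlo : ∀ x, f x - g x ≤ f x * Real.log (f x / g x) := by
    intro x
    rcases eq_or_ne (f x) 0 with h | h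
    · rw [h]; simp; linarith [hg0 x]
    · have hf' : 0 < f x := lt_of_le_of_ne (hf0 x) (Ne.symm h)
      have hg' : 0 < g x := by
        rcases lt_or_eq_of_le (hg0 x) with hg | hg
        · exact hg
        · exfalso; have := hratio x h; rw [← hg] at this; nlinarith
      have hdiv : 0 < f x / g x := div_pos hf' hg'
      have := Real.one_sub_inv_le_log_of_pos hdiv
      have h2 := mul_le_mul_of_nonneg_left this hf'.le
      have e : f x * (1 - (f x / g x)⁻¹) = f x - g x := by
        field_simp
      rw [e] at h2
      exact h2
  -- integrability of the Hellinger integrand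
  have hH2meas : Measurable (fun x => (Real.sqrt (f x) - Real.sqrt (g x)) ^ 2) :=
    (hfm.sqrt.sub hgm.sqrt).pow_const 2
  have hH2int : Integrable (fun x => (Real.sqrt (f x) - Real.sqrt (g x)) ^ 2) μ := by
    apply Integrable.mono' (hint_f.add hint_g) hH2meas.aestronglyMeasurable
    filter_upwards with x
    rw [Real.norm_eq_abs, abs_of_nonneg (sq_nonneg _), Pi.add_apply]
    nlinarith [Real.sq_sqrt (hf0 x), Real.sq_sqrt (hg0 x),
      mul_nonneg (Real.sqrt_nonneg (f x)) (Real.sqrt_nonneg (g x))]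
  -- integrability of the KL integrand
  have hKLmeas : Measurable (fun x => f x * Real.log (f x / g x)) :=
    hfm.mul ((hfm.div hgm).log)
  have hsub : Integrable (fun x => f x - g x) μ := hint_f.sub hint_g
  have habs : Integrable (fun x => |f x - g x|) μ := hsub.abs
  have hRHSint : Integrable
      (fun x => 2 * M * (Real.sqrt (f x) - Real.sqrt (g x)) ^ 2 + (f x - g x)) μ :=
    (hH2int.const_mul (2 * M)).add hsub
  have hKLint : Integrable (fun x => f x * Real.log (f x / g x)) μ := by
    apply Integrable.mono' ((hH2int.const_mul (2 * M)).add habs)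
      hKLmeas.aestronglyMeasurable
    filter_upwards with x
    rw [Real.norm_eq_abs]
    have h1 := hpt x
    have h2 := hlo x
    have h3 : 0 ≤ 2 * M * (Real.sqrt (f x) - Real.sqrt (g x)) ^ 2 := by positivity
    have h4 := abs_nonneg (f x - g x)
    have h5 := le_abs_self (f x - g x)
    have h6 := neg_abs_le (f x - g x)
    rw [abs_le]
    constructor <;> simp only [Pi.add_apply, Pi.sub_apply] <;> linarith
  -- conclude
  calc ∫ x, f x * Real.log (f x / g x) ∂μ
      ≤ ∫ x, (2 * M * (Real.sqrt (f x) - Real.sqrt (g x)) ^ 2 + (f x - g x)) ∂μ :=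
        integral_mono hKLint hRHSint hpt
    _ = 2 * M * ∫ x, (Real.sqrt (f x) - Real.sqrt (g x)) ^ 2 ∂μ := by
        rw [integral_add (hH2int.const_mul (2 * M)) hsub,
          integral_const_mul, integral_sub hint_f hint_g, hf1, hg1]
        ring
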